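/- Let α ∈ 𝕋^d be rationally independent and let g : 𝕋^d → ℝ be continuous. Suppose there exist a point θ̃ ∈ 𝕋^d and constants B₋ < 0 < B₊ such that the Birkhoff sums S^n(θ̃) = Σ_{i=0}^{n-1} g(θ̃ + iα) satisfy B₋ < S^n(θ̃) < B₊ for all n ≥ 0. Then there exists a continuous function h : 𝕋^d → ℝ solving the cohomological equation h(θ + α) − h(θ) = g(θ) for all θ ∈ 𝕋^d. -/

import Mathlib

open Filter Topology

instance : Fact ((0:ℝ) < 1) := ⟨one_pos⟩

/-- The `d`-dimensional torus `𝕋^d = ℝ^d/ℤ^d`. -/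
abbrev Torus (d : ℕ) := Fin d → AddCircle (1:ℝ)

/-- `α` is rationally independent iff the rotation `θ ↦ θ + α` is minimal,
i.e. every (forward) orbit is dense. -/
def RatIndep {d : ℕ} (α : Torus d) : Prop :=
  ∀ θ : Torus d, Dense (Set.range fun n : ℕ => θ + n • α)

/-- **Gottschalk–Hedlund theorem for an irrational torus rotation.**
If the Birkhoff sums of a continuous function `g` at one point `θ̃` are bounded
(`B₋ < Sⁿ(θ̃) < B₊` for all `n`), then the cohomological equation
`h(θ+α) − h(θ) = g(θ)` has a continuous solution. -/
theorem gottschalk_hedlund_rotation {d : ℕ} (α : Torus d) (hα : RatIndep α)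
    (g : Torus d → ℝ) (hg : Continuous g)
    (θt : Torus d) (Bm Bp : ℝ) (hBm : Bm < 0) (hBp : 0 < Bp)
    (hbound : ∀ n : ℕ, Bm < (∑ i ∈ Finset.range n, g (θt + i • α)) ∧
      (∑ i ∈ Finset.range n, g (θt + i • α)) < Bp) :
    ∃ h : Torus d → ℝ, Continuous h ∧ ∀ θ, h (θ + α) - h θ = g θ := by
  classical
  set T : (Torus d × ℝ) → (Torus d × ℝ) := fun p => (p.1 + α, p.2 + g p.1) with hTdef
  have hTc : Continuous T :=
    (continuous_fst.add continuous_const).prodMk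
      (continuous_snd.add (hg.comp continuous_fst))
  set Sb : ℕ → ℝ := fun n => ∑ i ∈ Finset.range n, g (θt + i • α) with hSb
  have horb : ∀ n : ℕ, T^[n] (θt, 0) = (θt + n • α, Sb n) := by
    intro n
    induction n with
    | zero => simp [Sb]
    | succ n ih =>
      rw [Function.iterate_succ_apply', ih]
      simp only [hTdef, hSb, Finset.sum_range_succ, succ_nsmul, Prod.mk.injEq]
      exact ⟨by abel, trivial⟩
  set K : Set (Torus d × ℝ) := closure (Set.range fun n : ℕ => T^[n] (θt, 0)) with hKdef
  have hKsub : K ⊆ Set.univ ×ˢ Set.Icc Bm Bp := by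
    apply closure_minimal
    · rintro p ⟨n, rfl⟩
      show T^[n] (θt, 0) ∈ _
      rw [horb n]
      exact ⟨trivial, le_of_lt (hbound n).1, le_of_lt (hbound n).2⟩
    · exact isClosed_univ.prod isClosed_Icc
  have hKcl : IsClosed K := isClosed_closure
  have hKcomp : IsCompact K :=
    IsCompact.of_isClosed_subset (isCompact_univ.prod isCompact_Icc) hKcl hKsub
  have hKne : K.Nonempty := ⟨(θt, 0), subset_closure ⟨0, rfl⟩⟩
  have hKinv : T '' K ⊆ K := by
    refine (image_closure_subset_closure_image hTc).trans (closure_mono ?_)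
    rintro p ⟨q, ⟨n, rfl⟩, rfl⟩
    exact ⟨n + 1, show T^[n+1] (θt, 0) = _ by rw [Function.iterate_succ_apply']⟩
  -- Zorn: find a minimal nonempty closed invariant subset of K
  set 𝒮 : Set (Set (Torus d × ℝ)) :=
    {A | A ⊆ K ∧ A.Nonempty ∧ IsClosed A ∧ T '' A ⊆ A} with h𝒮
  obtain ⟨M, -, hMmin⟩ : ∃ M, M ⊆ K ∧ Minimal (· ∈ 𝒮) M := by
    refine zorn_superset_nonempty 𝒮 ?_ K ⟨Set.Subset.rfl, hKne, hKcl, hKinv⟩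
    intro c hc𝒮 hchain hcne
    refine ⟨⋂₀ c, ⟨?_, ?_, ?_, ?_⟩, fun s hs => Set.sInter_subset_of_mem hs⟩
    · obtain ⟨U, hU⟩ := hcne
      exact (Set.sInter_subset_of_mem hU).trans (hc𝒮 hU).1
    · haveI : Nonempty c := hcne.to_subtype
      apply IsCompact.nonempty_sInter_of_directed_nonempty_isCompact_isClosed
      · intro a ha b hb
        rcases hchain.total ha hb with h | h
        · exact ⟨a, ha, Set.Subset.rfl, h⟩
        · exact ⟨b, hb, h, Set.Subset.rfl⟩
      · exact fun U hU => (hc𝒮 hU).2.1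
      · exact fun U hU => IsCompact.of_isClosed_subset hKcomp (hc𝒮 hU).2.2.1 (hc𝒮 hU).1
      · exact fun U hU => (hc𝒮 hU).2.2.1
    · exact isClosed_sInter fun U hU => (hc𝒮 hU).2.2.1
    · intro p hp U hU
      exact (hc𝒮 hU).2.2.2 (Set.image_mono (Set.sInter_subset_of_mem hU) hp)
  obtain ⟨⟨hMK, hMne, hMcl, hMinv⟩, hMleast⟩ := hMmin
  have hMcomp : IsCompact M := IsCompact.of_isClosed_subset hKcomp hMcl hMK
  -- minimality consequence, stated conveniently
  have hmin : ∀ A ∈ 𝒮, A ⊆ M → M ⊆ A := fun A hA hAM => hMleast hA hAM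
  -- T '' M = M
  have hTM : T '' M = M := by
    refine Set.Subset.antisymm hMinv (hmin (T '' M) ?_ hMinv)
    refine ⟨hMinv.trans hMK, hMne.image T, (hMcomp.image hTc).isClosed, ?_⟩
    exact Set.image_mono hMinv
  -- projection of M is everything
  have hproj : ∀ θ : Torus d, ∃ t : ℝ, (θ, t) ∈ M := by
    obtain ⟨p0, hp0⟩ := hMne
    have hstep : ∀ q ∈ M, (q.1 + α, q.2 + g q.1) ∈ M := fun q hq =>
      hMinv (Set.mem_image_of_mem T hq)
    have horbM : ∀ n : ℕ, ∃ t, (p0.1 + n • α, t) ∈ M := by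
      intro n
      induction n with
      | zero => exact ⟨p0.2, by simpa using hp0⟩
      | succ n ih =>
        obtain ⟨t, ht⟩ := ih
        refine ⟨t + g (p0.1 + n • α), ?_⟩
        have := hstep _ ht
        simpa [succ_nsmul, add_assoc] using this
    have hPcl : IsClosed (Prod.fst '' M) := (hMcomp.image continuous_fst).isClosed
    have hPuniv : Prod.fst '' M = Set.univ := by
      apply Set.eq_univ_of_univ_subset
      calc Set.univ = closure (Set.range fun n : ℕ => p0.1 + n • α) :=
            ((hα p0.1).closure_eq).symm
        _ ⊆ closure (Prod.fst '' M) := by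
            apply closure_mono
            rintro θ ⟨n, rfl⟩
            obtain ⟨t, ht⟩ := horbM n
            exact ⟨(p0.1 + n • α, t), ht, rfl⟩
        _ = Prod.fst '' M := hPcl.closure_eq
    intro θ
    have : θ ∈ Prod.fst '' M := hPuniv ▸ Set.mem_univ θ
    obtain ⟨p, hpM, hp1⟩ := this
    exact ⟨p.2, by rwa [← hp1, Prod.mk.eta]⟩
  -- M is a graph: uniqueness of the fiber point
  have huniq : ∀ p ∈ M, ∀ q ∈ M, p.1 = q.1 → p = q := by
    intro p hp q hq hpq
    by_contra hne
    have hc : p.2 ≠ q.2 := fun h => hne (Prod.ext hpq h)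
    set c : ℝ := q.2 - p.2 with hcdef
    have hc0 : c ≠ 0 := sub_ne_zero.mpr (Ne.symm hc)
    set τ : (Torus d × ℝ) → (Torus d × ℝ) := fun x => (x.1, x.2 + c) with hτdef
    have hτc : Continuous τ := continuous_fst.prodMk (continuous_snd.add continuous_const)
    have hcomm : ∀ x, τ (T x) = T (τ x) := by
      intro x
      simp only [hτdef, hTdef, Prod.mk.injEq]
      exact ⟨trivial, by ring⟩
    -- M ∩ τ '' M is in 𝒮
    have hA : (M ∩ τ '' M) ∈ 𝒮 := by
      refine ⟨(Set.inter_subset_left).trans hMK, ⟨q, hq, p, hp, ?_⟩, 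
        hMcl.inter (hMcomp.image hτc).isClosed, ?_⟩
      · simp only [hτdef]
        rw [hcdef]
        exact Prod.ext hpq (by ring)
      · intro x hx
        obtain ⟨y, ⟨hyM, hyτ⟩, rfl⟩ := hx
        refine ⟨hMinv (Set.mem_image_of_mem T hyM), ?_⟩
        obtain ⟨z, hzM, rfl⟩ := hyτ
        exact ⟨T z, hMinv (Set.mem_image_of_mem T hzM), hcomm z⟩
    have hMsub : M ⊆ τ '' M := (hmin _ hA Set.inter_subset_left).trans Set.inter_subset_right
    -- iterate: (x.1, x.2 - n*c) ∈ M for all n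
    have hiter : ∀ n : ℕ, ∀ x ∈ M, (x.1, x.2 - n * c) ∈ M := by
      intro n
      induction n with
      | zero => intro x hx; simpa using hx
      | succ n ih =>
        intro x hx
        obtain ⟨y, hyM, hyx⟩ := hMsub hx
        simp only [hτdef, Prod.ext_iff] at hyx
        have h1 : y.1 = x.1 := hyx.1
        have h2 : y.2 = x.2 - c := by linarith [hyx.2]
        have := ih y hyM
        rw [h1, h2] at this
        convert this using 2
        push_cast
        ring
    obtain ⟨x, hx⟩ := hMne
    have hbd : ∀ n : ℕ, Bm ≤ x.2 - n * c ∧ x.2 - n * c ≤ Bp := by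
      intro n
      have := hKsub (hMK (hiter n x hx))
      exact ⟨this.2.1, this.2.2⟩
    rcases lt_or_gt_of_ne hc0 with hneg | hpos
    · obtain ⟨n, hn⟩ := exists_nat_gt ((Bp - x.2) / (-c))
      have hnc : (Bp - x.2) < n * (-c) := by
        rw [div_lt_iff₀ (by linarith)] at hn
        linarith
      have := (hbd n).2
      nlinarith
    · obtain ⟨n, hn⟩ := exists_nat_gt ((x.2 - Bm) / c)
      have hnc : (x.2 - Bm) < n * c := by
        rw [div_lt_iff₀ hpos] at hn
        linarith
      have := (hbd n).1
      linarith
  -- build the homeomorphism M ≃ₜ Torus d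
  haveI : CompactSpace M := isCompact_iff_compactSpace.mp hMcomp
  have hbij : Function.Bijective (fun m : M => (m : Torus d × ℝ).1) := by
    constructor
    · intro a b hab
      exact Subtype.ext (huniq _ a.2 _ b.2 hab)
    · intro θ
      obtain ⟨t, ht⟩ := hproj θ
      exact ⟨⟨(θ, t), ht⟩, rfl⟩
  set e : M ≃ Torus d := Equiv.ofBijective _ hbij with hedef
  have hec : Continuous e := continuous_fst.comp continuous_subtype_val
  set homeo : M ≃ₜ Torus d := hec.homeoOfEquivCompactToT2 with hhdef
  refine ⟨fun θ => (homeo.symm θ).val.2,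
    continuous_snd.comp (continuous_subtype_val.comp homeo.symm.continuous), ?_⟩
  intro θ
  set m : Torus d × ℝ := (homeo.symm θ).val with hmdef
  have hmM : m ∈ M := (homeo.symm θ).2
  have hm1 : m.1 = θ := homeo.apply_symm_apply θ
  have hTm : T m ∈ M := hMinv (Set.mem_image_of_mem T hmM)
  have hkey : (homeo.symm (θ + α)).val = T m := by
    apply huniq _ (homeo.symm (θ + α)).2 _ hTm
    have h1 : (homeo.symm (θ + α)).val.1 = θ + α := homeo.apply_symm_apply (θ + α)
    have h2 : (T m).1 = θ + α := by simp [hTdef, hm1]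
    rw [h1, h2]
  show (homeo.symm (θ + α)).val.2 - (homeo.symm θ).val.2 = g θ
  rw [hkey]
  show m.2 + g m.1 - m.2 = g θ
  rw [hm1]
  ring
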